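/- The Z-submodules of Z^3 spanned by (1,1,0), (1,0,1), and (0,1,1) are pairwise compatible (each pair admits a common basis of Z^3), but the three together do not have the common basis property; indeed their sum has index 2 in Z^3. -/

import Mathlib

/-- A collection of submodules of `ℤ³` has the common basis property if there is
a `ℤ`-basis `b` of `ℤ³` such that each member is the span of a subset of `b`. -/
def HasCommonBasis (σ : Set (Submodule ℤ (Fin 3 → ℤ))) : Prop :=
  ∃ b : Module.Basis (Fin 3) ℤ (Fin 3 → ℤ),
    ∀ U ∈ σ, ∃ s : Set (Fin 3), U = Submodule.span ℤ (b '' s)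

noncomputable def basisOfMul (M N : Matrix (Fin 3) (Fin 3) ℤ) (h1 : M * N = 1)
    (h2 : N * M = 1) : Module.Basis (Fin 3) ℤ (Fin 3 → ℤ) :=
  (Pi.basisFun ℤ (Fin 3)).map
    (LinearEquiv.ofLinear (Matrix.toLin' M) (Matrix.toLin' N)
      (by rw [← Matrix.toLin'_mul, h1, Matrix.toLin'_one])
      (by rw [← Matrix.toLin'_mul, h2, Matrix.toLin'_one]))

theorem basisOfMul_apply (M N : Matrix (Fin 3) (Fin 3) ℤ) (h1 : M * N = 1)
    (h2 : N * M = 1) (i : Fin 3) : basisOfMul M N h1 h2 i = fun j => M j i := by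
  funext j
  simp [basisOfMul, Matrix.toLin'_apply, Matrix.mulVec_single]

theorem pairCB (v w : Fin 3 → ℤ) (M N : Matrix (Fin 3) (Fin 3) ℤ) (h1 : M * N = 1)
    (h2 : N * M = 1) (hv : (fun j => M j 0) = v) (hw : (fun j => M j 1) = w) :
    HasCommonBasis {Submodule.span ℤ {v}, Submodule.span ℤ {w}} := by
  refine ⟨basisOfMul M N h1 h2, ?_⟩
  intro U hU
  simp only [Set.mem_insert_iff, Set.mem_singleton_iff] at hU
  rcases hU with rfl | rfl
  · exact ⟨{0}, by rw [Set.image_singleton, basisOfMul_apply, hv]⟩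
  · exact ⟨{1}, by rw [Set.image_singleton, basisOfMul_apply, hw]⟩

/-- The parity linear functional `x ↦ x 0 + x 1 + x 2 mod 2`. -/
def parf : (Fin 3 → ℤ) →ₗ[ℤ] ZMod 2 where
  toFun x := ((x 0 + x 1 + x 2 : ℤ) : ZMod 2)
  map_add' x y := by simp only [Pi.add_apply]; push_cast; ring
  map_smul' c x := by
    simp only [Pi.smul_apply, smul_eq_mul, RingHom.id_apply, zsmul_eq_mul]
    push_cast; ring

theorem parf_v1 : parf ![1, 1, 0] = 0 := by simp [parf]; decide
theorem parf_v2 : parf ![1, 0, 1] = 0 := by simp [parf]; decide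
theorem parf_v3 : parf ![0, 1, 1] = 0 := by simp [parf]; decide

theorem S_eq_ker :
    (Submodule.span ℤ {(![1, 1, 0] : Fin 3 → ℤ)} ⊔
      Submodule.span ℤ {(![1, 0, 1] : Fin 3 → ℤ)} ⊔
      Submodule.span ℤ {(![0, 1, 1] : Fin 3 → ℤ)}) = LinearMap.ker parf := by
  apply le_antisymm
  · refine sup_le (sup_le ?_ ?_) ?_ <;>
    · rw [Submodule.span_le]
      rintro x rfl
      simp only [SetLike.mem_coe, LinearMap.mem_ker, parf_v1, parf_v2, parf_v3]
  · intro x hx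
    rw [LinearMap.mem_ker] at hx
    have hdvd : (2 : ℤ) ∣ x 0 + x 1 + x 2 := by
      have := (ZMod.intCast_zmod_eq_zero_iff_dvd (x 0 + x 1 + x 2) 2).mp hx
      exact_mod_cast this
    obtain ⟨k, hk⟩ := hdvd
    have hx' : x = (k - x 2) • (![1, 1, 0] : Fin 3 → ℤ) +
        (k - x 1) • (![1, 0, 1] : Fin 3 → ℤ) + (k - x 0) • (![0, 1, 1] : Fin 3 → ℤ) := by
      funext j
      fin_cases j <;>
        (simp <;> omega)
    rw [hx']
    have m1 : (![1, 1, 0] : Fin 3 → ℤ) ∈ Submodule.span ℤ {(![1, 1, 0] : Fin 3 → ℤ)} :=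
      Submodule.subset_span rfl
    have m2 : (![1, 0, 1] : Fin 3 → ℤ) ∈ Submodule.span ℤ {(![1, 0, 1] : Fin 3 → ℤ)} :=
      Submodule.subset_span rfl
    have m3 : (![0, 1, 1] : Fin 3 → ℤ) ∈ Submodule.span ℤ {(![0, 1, 1] : Fin 3 → ℤ)} :=
      Submodule.subset_span rfl
    exact add_mem (add_mem
      (Submodule.mem_sup_left (Submodule.mem_sup_left (Submodule.smul_mem _ _ m1)))
      (Submodule.mem_sup_left (Submodule.mem_sup_right (Submodule.smul_mem _ _ m2))))
      (Submodule.mem_sup_right (Submodule.smul_mem _ _ m3))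

theorem parf_surj : Function.Surjective parf := by
  intro y
  fin_cases y
  · exact ⟨0, by simp [parf]; rfl⟩
  · exact ⟨![1, 0, 0], by simp [parf]; rfl⟩

/-- The `ℤ`-submodules of `ℤ³` spanned by `(1,1,0)`, `(1,0,1)` and `(0,1,1)` are
pairwise compatible, but the three together do not have the common basis
property; indeed their sum has index 2 in `ℤ³`. -/
theorem stmt10 :
    HasCommonBasis {Submodule.span ℤ {(![1, 1, 0] : Fin 3 → ℤ)},
        Submodule.span ℤ {(![1, 0, 1] : Fin 3 → ℤ)}} ∧
    HasCommonBasis {Submodule.span ℤ {(![1, 1, 0] : Fin 3 → ℤ)},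
        Submodule.span ℤ {(![0, 1, 1] : Fin 3 → ℤ)}} ∧
    HasCommonBasis {Submodule.span ℤ {(![1, 0, 1] : Fin 3 → ℤ)},
        Submodule.span ℤ {(![0, 1, 1] : Fin 3 → ℤ)}} ∧
    ¬ HasCommonBasis {Submodule.span ℤ {(![1, 1, 0] : Fin 3 → ℤ)},
        Submodule.span ℤ {(![1, 0, 1] : Fin 3 → ℤ)},
        Submodule.span ℤ {(![0, 1, 1] : Fin 3 → ℤ)}} ∧
    Nat.card ((Fin 3 → ℤ) ⧸ (Submodule.span ℤ {(![1, 1, 0] : Fin 3 → ℤ)} ⊔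
        Submodule.span ℤ {(![1, 0, 1] : Fin 3 → ℤ)} ⊔
        Submodule.span ℤ {(![0, 1, 1] : Fin 3 → ℤ)})) = 2 := by
  refine ⟨?_, ?_, ?_, ?_, ?_⟩
  · exact pairCB _ _ !![1,1,0;1,0,0;0,1,1] !![0,1,0;1,-1,0;-1,1,1]
      (by decide) (by decide)
      (by funext j; fin_cases j <;> rfl) (by funext j; fin_cases j <;> rfl)
  · exact pairCB _ _ !![1,0,1;1,1,0;0,1,0] !![0,1,-1;0,0,1;1,-1,1]
      (by decide) (by decide)
      (by funext j; fin_cases j <;> rfl) (by funext j; fin_cases j <;> rfl)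
  · exact pairCB _ _ !![1,0,1;0,1,0;1,1,0] !![0,-1,1;0,1,0;1,1,-1]
      (by decide) (by decide)
      (by funext j; fin_cases j <;> rfl) (by funext j; fin_cases j <;> rfl)
  · rintro ⟨b, hb⟩
    -- for each of the three vectors, find a basis element which is a multiple of it
    have key : ∀ v : Fin 3 → ℤ,
        Submodule.span ℤ {v} ∈ ({Submodule.span ℤ {(![1, 1, 0] : Fin 3 → ℤ)},
          Submodule.span ℤ {(![1, 0, 1] : Fin 3 → ℤ)},
          Submodule.span ℤ {(![0, 1, 1] : Fin 3 → ℤ)}} : Set (Submodule ℤ (Fin 3 → ℤ))) →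
        v ≠ 0 → ∃ j : Fin 3, ∃ c : ℤ, c ≠ 0 ∧ b j = c • v := by
      intro v hv hv0
      obtain ⟨s, hs⟩ := hb _ hv
      have hsne : s.Nonempty := by
        rcases s.eq_empty_or_nonempty with rfl | h
        · exfalso
          rw [Set.image_empty, Submodule.span_empty] at hs
          have : v ∈ Submodule.span ℤ {v} := Submodule.subset_span rfl
          rw [hs] at this
          exact hv0 (by simpa using this)
        · exact h
      obtain ⟨j, hj⟩ := hsne
      have hbj : b j ∈ Submodule.span ℤ {v} := by
        rw [hs]
        exact Submodule.subset_span ⟨j, hj, rfl⟩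
      rw [Submodule.mem_span_singleton] at hbj
      obtain ⟨c, hc⟩ := hbj
      refine ⟨j, c, ?_, hc.symm⟩
      rintro rfl
      exact b.ne_zero j (by rw [← hc, zero_smul])
    obtain ⟨j1, c1, hc1, hb1⟩ := key ![1,1,0] (by simp) (by
      intro h; have := congrFun h 0; simp at this)
    obtain ⟨j2, c2, hc2, hb2⟩ := key ![1,0,1] (by simp) (by
      intro h; have := congrFun h 0; simp at this)
    obtain ⟨j3, c3, hc3, hb3⟩ := key ![0,1,1] (by simp) (by
      intro h; have := congrFun h 1; simp at this)
    -- parf vanishes on each b j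
    have hker : ∀ j, parf (b j) = 0 := by
      have h12 : j1 ≠ j2 := by
        rintro rfl
        rw [hb1] at hb2
        have := congrFun hb2 2
        simp at this
        exact hc2 this.symm
      have h13 : j1 ≠ j3 := by
        rintro rfl
        rw [hb1] at hb3
        have := congrFun hb3 0
        simp at this
        exact hc1 this
      have h23 : j2 ≠ j3 := by
        rintro rfl
        rw [hb2] at hb3
        have := congrFun hb3 0
        simp at this
        exact hc2 this
      intro j
      have hcover : j = j1 ∨ j = j2 ∨ j = j3 := by
        by_contra h
        push_neg at h
        obtain ⟨n1, n2, n3⟩ := h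
        have : Finset.card {j, j1, j2, j3} ≤ 3 := by
          have := Finset.card_le_univ ({j, j1, j2, j3} : Finset (Fin 3))
          simpa using this
        rw [Finset.card_insert_of_notMem (by simp [n1, n2, n3]),
          Finset.card_insert_of_notMem (by simp [h12, h13]),
          Finset.card_insert_of_notMem (by simp [h23]),
          Finset.card_singleton] at this
        omega
      rcases hcover with rfl | rfl | rfl
      · rw [hb1, map_smul, parf_v1, smul_zero]
      · rw [hb2, map_smul, parf_v2, smul_zero]
      · rw [hb3, map_smul, parf_v3, smul_zero]
    have : parf = 0 := b.ext (by simpa using hker)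
    have h1 : parf ![1, 0, 0] = 1 := by simp [parf]
    rw [this] at h1
    simp at h1
  · have e : ((Fin 3 → ℤ) ⧸ (Submodule.span ℤ {(![1, 1, 0] : Fin 3 → ℤ)} ⊔
        Submodule.span ℤ {(![1, 0, 1] : Fin 3 → ℤ)} ⊔
        Submodule.span ℤ {(![0, 1, 1] : Fin 3 → ℤ)})) ≃ₗ[ℤ] ZMod 2 :=
      (Submodule.quotEquivOfEq _ _ S_eq_ker).trans
        (parf.quotKerEquivOfSurjective parf_surj)
    rw [Nat.card_congr e.toEquiv]
    simp [Nat.card_eq_fintype_card]
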